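/- Let (Ω, μ) be a probability space, A an invertible N×N real matrix with largest and smallest singular values ρ_max and ρ_min and condition number κ(A) = ρ_max/ρ_min, F : Ω → R^N Bochner integrable, and α* := ω ↦ A⁻¹F(ω). Let S be a nonempty set of Bochner-integrable functions Ω → R^N and let α̂_H ∈ S be a minimizer over S of the normal-equation loss H(α) = ∫_Ω |AᵀAα(ω) − AᵀF(ω)|₂ dμ(ω). Then ‖α* − α̂_H‖_{L¹(Ω)} ≤ κ(A)² · inf_{α ∈ S} ‖α − α*‖_{L¹(Ω)}. -/

import Mathlib

open MeasureTheory Matrix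

/-- The Euclidean norm on `ℝ^N`. -/
noncomputable def euclNorm {N : ℕ} (x : Fin N → ℝ) : ℝ := Real.sqrt (∑ i, x i ^ 2)

lemma euclNorm_nonneg {N : ℕ} (x : Fin N → ℝ) : 0 ≤ euclNorm x := Real.sqrt_nonneg _

lemma euclNorm_neg {N : ℕ} (x : Fin N → ℝ) : euclNorm (-x) = euclNorm x := by
  simp [euclNorm]

lemma euclNorm_eq_norm {N : ℕ} (x : Fin N → ℝ) :
    euclNorm x = ‖(WithLp.equiv 2 (Fin N → ℝ)).symm x‖ := by
  rw [EuclideanSpace.norm_eq]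
  simp [euclNorm, Real.norm_eq_abs, sq_abs]

lemma key_bounds {N : ℕ} (M : Matrix (Fin N) (Fin N) ℝ) (hM : M.IsHermitian)
    {a b : ℝ} (ha0 : 0 ≤ a) (hb0 : 0 ≤ b)
    (hab : ∀ i, a ≤ hM.eigenvalues i ∧ hM.eigenvalues i ≤ b) (x : Fin N → ℝ) :
    a * euclNorm x ≤ euclNorm (M *ᵥ x) ∧ euclNorm (M *ᵥ x) ≤ b * euclNorm x := by
  classical
  set V := hM.eigenvectorBasis with hV
  set y : EuclideanSpace ℝ (Fin N) := (WithLp.equiv 2 (Fin N → ℝ)).symm x with hy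
  set z : EuclideanSpace ℝ (Fin N) := (WithLp.equiv 2 (Fin N → ℝ)).symm (M *ᵥ x) with hzdef
  have hrepr : ∀ i, V.repr z i = hM.eigenvalues i * V.repr y i := by
    intro i
    rw [V.repr_apply_apply, V.repr_apply_apply]
    have h1 : (inner ℝ (V i) z : ℝ) = (⇑(V i)) ⬝ᵥ (M *ᵥ x) := by
      simp [PiLp.inner_apply, RCLike.inner_apply, dotProduct, hzdef,
        WithLp.equiv_symm_apply, mul_comm]
    have h2 : (inner ℝ (V i) y : ℝ) = (⇑(V i)) ⬝ᵥ x := by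
      simp [PiLp.inner_apply, RCLike.inner_apply, dotProduct, hy,
        WithLp.equiv_symm_apply, mul_comm]
    rw [h1, h2]
    have hMT : Mᵀ = M := by
      rw [← conjTranspose_eq_transpose_of_trivial]; exact hM.eq
    have hsym : (⇑(V i)) ᵥ* M = M *ᵥ (⇑(V i)) := by
      conv_lhs => rw [← hMT, vecMul_transpose]
    rw [dotProduct_mulVec, hsym, hM.mulVec_eigenvectorBasis,
      smul_dotProduct, smul_eq_mul]
  have hnz : euclNorm (M *ᵥ x) = Real.sqrt (∑ i, (hM.eigenvalues i * V.repr y i) ^ 2) := by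
    rw [euclNorm_eq_norm, ← hzdef, ← V.repr.norm_map z, EuclideanSpace.norm_eq]
    congr 1
    exact Finset.sum_congr rfl fun i _ => by rw [Real.norm_eq_abs, sq_abs, hrepr]
  have hny : euclNorm x = Real.sqrt (∑ i, (V.repr y i) ^ 2) := by
    rw [euclNorm_eq_norm, ← hy, ← V.repr.norm_map y, EuclideanSpace.norm_eq]
    congr 1
    exact Finset.sum_congr rfl fun i _ => by rw [Real.norm_eq_abs, sq_abs]
  constructor
  · rw [hny, hnz, ← Real.sqrt_sq ha0, ← Real.sqrt_mul (sq_nonneg a), Finset.mul_sum]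
    apply Real.sqrt_le_sqrt
    apply Finset.sum_le_sum
    intro i _
    rw [mul_pow]
    exact mul_le_mul_of_nonneg_right
      (pow_le_pow_left₀ ha0 (hab i).1 2) (sq_nonneg _)
  · rw [hny, hnz, ← Real.sqrt_sq hb0, ← Real.sqrt_mul (sq_nonneg b), Finset.mul_sum]
    apply Real.sqrt_le_sqrt
    apply Finset.sum_le_sum
    intro i _
    rw [mul_pow]
    exact mul_le_mul_of_nonneg_right
      (pow_le_pow_left₀ (le_trans ha0 (hab i).1) (hab i).2 2) (sq_nonneg _)

lemma integrable_euclNorm_comp {Ω : Type*} [MeasurableSpace Ω] {μ : Measure Ω} {N : ℕ}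
    {g : Ω → Fin N → ℝ} (hg : Integrable g μ) :
    Integrable (fun ω => euclNorm (g ω)) μ := by
  have hL : Integrable (fun ω => ((EuclideanSpace.equiv (Fin N) ℝ).symm :
      (Fin N → ℝ) →L[ℝ] EuclideanSpace ℝ (Fin N)) (g ω)) μ :=
    ContinuousLinearMap.integrable_comp _ hg
  refine hL.norm.congr (Filter.Eventually.of_forall fun ω => ?_)
  simp only [euclNorm_eq_norm]
  rfl

lemma integrable_mulVec_comp {Ω : Type*} [MeasurableSpace Ω] {μ : Measure Ω} {N : ℕ}
    (B : Matrix (Fin N) (Fin N) ℝ) {g : Ω → Fin N → ℝ} (hg : Integrable g μ) :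
    Integrable (fun ω => B *ᵥ g ω) μ := by
  have := ContinuousLinearMap.integrable_comp
    (LinearMap.toContinuousLinearMap (Matrix.mulVecLin B)) hg
  simpa using this

/-- Let `(Ω, μ)` be a probability space, `A` an invertible `N×N` real matrix with largest and
smallest singular values `ρmax` and `ρmin` (the square roots of the eigenvalues of `AᵀA`),
`F : Ω → ℝ^N` Bochner integrable, and `α* = A⁻¹ F`. Let `S` be a nonempty set of integrable
functions `Ω → ℝ^N` and `αH ∈ S` a minimizer over `S` of the normal-equation loss
`H(α) = ∫ |AᵀAα(ω) − AᵀF(ω)|₂ dμ`. Then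
`‖α* − αH‖_{L¹(Ω)} ≤ κ(A)² inf_{α ∈ S} ‖α − α*‖_{L¹(Ω)}` where `κ(A) = ρmax / ρmin`. -/
theorem stmt4 {Ω : Type*} [MeasurableSpace Ω] (μ : Measure Ω) [IsProbabilityMeasure μ]
    {N : ℕ} (A : Matrix (Fin N) (Fin N) ℝ) (hAinv : IsUnit A)
    (hAA : (Aᵀ * A).IsHermitian) (ρmax ρmin : ℝ)
    (hρmax : IsGreatest (Set.range fun i => Real.sqrt (hAA.eigenvalues i)) ρmax)
    (hρmin : IsLeast (Set.range fun i => Real.sqrt (hAA.eigenvalues i)) ρmin)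
    (F : Ω → Fin N → ℝ) (hF : Integrable F μ)
    (αstar : Ω → Fin N → ℝ) (hαstar : αstar = fun ω => A⁻¹.mulVec (F ω))
    (S : Set (Ω → Fin N → ℝ)) (hSne : S.Nonempty) (hSint : ∀ α ∈ S, Integrable α μ)
    (αH : Ω → Fin N → ℝ) (hαHmem : αH ∈ S)
    (hαHmin : ∀ α ∈ S, (∫ ω, euclNorm ((Aᵀ * A).mulVec (αH ω) - Aᵀ.mulVec (F ω)) ∂μ)
        ≤ ∫ ω, euclNorm ((Aᵀ * A).mulVec (α ω) - Aᵀ.mulVec (F ω)) ∂μ) :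
    (∫ ω, euclNorm (αstar ω - αH ω) ∂μ)
      ≤ (ρmax / ρmin) ^ 2 * ⨅ α : S, ∫ ω, euclNorm ((α : Ω → Fin N → ℝ) ω - αstar ω) ∂μ := by
  classical
  have hdet : IsUnit A.det := (isUnit_iff_isUnit_det A).mp hAinv
  -- positive definiteness of AᵀA
  have hPD : (Aᵀ * A).PosDef := by
    refine Matrix.PosDef.of_dotProduct_mulVec_pos hAA fun x hx => ?_
    have hAx : A *ᵥ x ≠ 0 := by
      intro h
      apply hx
      have : A⁻¹ *ᵥ (A *ᵥ x) = x := by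
        rw [mulVec_mulVec, nonsing_inv_mul A hdet, one_mulVec]
      rw [← this, h, mulVec_zero]
    have heq : star x ⬝ᵥ ((Aᵀ * A) *ᵥ x) = (A *ᵥ x) ⬝ᵥ (A *ᵥ x) := by
      rw [← mulVec_mulVec, dotProduct_mulVec]
      congr 1
      rw [vecMul_transpose]
      simp
    rw [heq]
    have hnonneg : 0 ≤ (A *ᵥ x) ⬝ᵥ (A *ᵥ x) :=
      Finset.sum_nonneg fun i _ => mul_self_nonneg _
    rcases hnonneg.lt_or_eq with h | h
    · exact h
    · exact absurd (dotProduct_self_eq_zero.mp h.symm) hAx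
  have heigpos : ∀ i, 0 < hAA.eigenvalues i := fun i => hPD.eigenvalues_pos i
  obtain ⟨jmin, hjmin⟩ := hρmin.1
  have hρmin0 : 0 < ρmin := by
    rw [← hjmin]
    exact Real.sqrt_pos.2 (heigpos jmin)
  have hρmax0 : 0 < ρmax := lt_of_lt_of_le hρmin0 (hρmax.2 hρmin.1)
  have hbounds : ∀ i, ρmin ^ 2 ≤ hAA.eigenvalues i ∧ hAA.eigenvalues i ≤ ρmax ^ 2 := by
    intro i
    have h1 : ρmin ≤ Real.sqrt (hAA.eigenvalues i) := hρmin.2 ⟨i, rfl⟩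
    have h2 : Real.sqrt (hAA.eigenvalues i) ≤ ρmax := hρmax.2 ⟨i, rfl⟩
    have hs : Real.sqrt (hAA.eigenvalues i) ^ 2 = hAA.eigenvalues i :=
      Real.sq_sqrt (heigpos i).le
    constructor
    · calc ρmin ^ 2 ≤ Real.sqrt (hAA.eigenvalues i) ^ 2 :=
            pow_le_pow_left₀ hρmin0.le h1 2
        _ = hAA.eigenvalues i := hs
    · calc hAA.eigenvalues i = Real.sqrt (hAA.eigenvalues i) ^ 2 := hs.symm
        _ ≤ ρmax ^ 2 := pow_le_pow_left₀ (Real.sqrt_nonneg _) h2 2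
  have hlow := fun x => (key_bounds (Aᵀ * A) hAA (sq_nonneg ρmin) (sq_nonneg ρmax) hbounds x).1
  have hhigh := fun x => (key_bounds (Aᵀ * A) hAA (sq_nonneg ρmin) (sq_nonneg ρmax) hbounds x).2
  -- αstar satisfies the normal equations
  have hMstar : ∀ ω, (Aᵀ * A) *ᵥ αstar ω = Aᵀ *ᵥ F ω := by
    intro ω
    rw [hαstar]
    simp only
    rw [mulVec_mulVec, mul_assoc, mul_nonsing_inv A hdet, mul_one]
  -- integrability
  have hαstarInt : Integrable αstar μ := by
    rw [hαstar]; exact integrable_mulVec_comp _ hF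
  have hαHInt : Integrable αH μ := hSint αH hαHmem
  -- Step 1
  have step1 : ρmin ^ 2 * ∫ ω, euclNorm (αstar ω - αH ω) ∂μ
      ≤ ∫ ω, euclNorm ((Aᵀ * A) *ᵥ αH ω - Aᵀ *ᵥ F ω) ∂μ := by
    rw [← integral_const_mul]
    apply integral_mono
    · exact (integrable_euclNorm_comp (hαstarInt.sub hαHInt)).const_mul _
    · exact integrable_euclNorm_comp
        ((integrable_mulVec_comp (Aᵀ * A) hαHInt).sub (integrable_mulVec_comp Aᵀ hF))
    · intro ω
      have he : (Aᵀ * A) *ᵥ αH ω - Aᵀ *ᵥ F ω = (Aᵀ * A) *ᵥ (αH ω - αstar ω) := by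
        rw [mulVec_sub, hMstar ω]
      have hneg : euclNorm (αstar ω - αH ω) = euclNorm (αH ω - αstar ω) := by
        rw [← neg_sub (αH ω), euclNorm_neg]
      simp only [he, hneg]
      exact hlow _
  -- Step 3 for each α ∈ S
  have step3 : ∀ α ∈ S, (∫ ω, euclNorm ((Aᵀ * A) *ᵥ α ω - Aᵀ *ᵥ F ω) ∂μ)
      ≤ ρmax ^ 2 * ∫ ω, euclNorm (α ω - αstar ω) ∂μ := by
    intro α hα
    rw [← integral_const_mul]
    apply integral_mono
    · exact integrable_euclNorm_comp
        ((integrable_mulVec_comp (Aᵀ * A) (hSint α hα)).sub (integrable_mulVec_comp Aᵀ hF))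
    · exact (integrable_euclNorm_comp ((hSint α hα).sub hαstarInt)).const_mul _
    · intro ω
      have he : (Aᵀ * A) *ᵥ α ω - Aᵀ *ᵥ F ω = (Aᵀ * A) *ᵥ (α ω - αstar ω) := by
        rw [mulVec_sub, hMstar ω]
      simp only [he]
      exact hhigh _
  -- combine per α
  have hper : ∀ α ∈ S, (∫ ω, euclNorm (αstar ω - αH ω) ∂μ)
      ≤ (ρmax / ρmin) ^ 2 * ∫ ω, euclNorm (α ω - αstar ω) ∂μ := by
    intro α hα
    have h := (step1.trans (hαHmin α hα)).trans (step3 α hα)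
    have hρ2 : 0 < ρmin ^ 2 := pow_pos hρmin0 2
    rw [div_pow, div_mul_eq_mul_div, le_div_iff₀ hρ2, mul_comm _ (ρmin ^ 2)]
    linarith [h]
  -- pass to the infimum
  haveI : Nonempty S := hSne.to_subtype
  set I1 := ∫ ω, euclNorm (αstar ω - αH ω) ∂μ with hI1
  have hκpos : 0 < (ρmax / ρmin) ^ 2 := pow_pos (div_pos hρmax0 hρmin0) 2
  have hinf : I1 / (ρmax / ρmin) ^ 2
      ≤ ⨅ α : S, ∫ ω, euclNorm ((α : Ω → Fin N → ℝ) ω - αstar ω) ∂μ := by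
    apply le_ciInf
    intro α
    rw [div_le_iff₀ hκpos, mul_comm]
    exact hper α α.2
  calc I1 = (ρmax / ρmin) ^ 2 * (I1 / (ρmax / ρmin) ^ 2) := by
        field_simp
    _ ≤ (ρmax / ρmin) ^ 2 * ⨅ α : S, ∫ ω, euclNorm ((α : Ω → Fin N → ℝ) ω - αstar ω) ∂μ :=
        mul_le_mul_of_nonneg_left hinf hκpos.le
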